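/- Let p ∈ ℤ[X] be a real polynomial and α₁ < α₂ two distinct real roots of p. Then the Thom encodings of α₁ and α₂, i.e., the sign sequences (sign p'(α_i), …, sign p^{(deg p)}(α_i)), are distinct. -/

import Mathlib

open Polynomial

private lemma sign_cases (a : ℝ) : a < 0 ∨ a = 0 ∨ 0 < a := lt_trichotomy a 0

private lemma sign_eq_pos {a b : ℝ} (h : Real.sign a = Real.sign b) (ha : 0 < a) : 0 < b := by
  rcases lt_trichotomy b 0 with hb | hb | hb
  · rw [Real.sign_of_pos ha, Real.sign_of_neg hb] at h; norm_num at h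
  · rw [Real.sign_of_pos ha, hb, Real.sign_zero] at h; norm_num at h
  · exact hb

private lemma sign_eq_neg {a b : ℝ} (h : Real.sign a = Real.sign b) (ha : a < 0) : b < 0 := by
  rcases lt_trichotomy b 0 with hb | hb | hb
  · exact hb
  · rw [Real.sign_of_neg ha, hb, Real.sign_zero] at h; norm_num at h
  · rw [Real.sign_of_neg ha, Real.sign_of_pos hb] at h; norm_num at h

private lemma thom_aux : ∀ (n : ℕ) (q : Polynomial ℝ), q.natDegree ≤ n →
    ∀ α₁ α₂ : ℝ, α₁ < α₂ →
    (∀ k ≤ n, Real.sign ((Polynomial.derivative^[k] q).eval α₁) =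
      Real.sign ((Polynomial.derivative^[k] q).eval α₂)) →
    ∀ x ∈ Set.Icc α₁ α₂, Real.sign (q.eval x) = Real.sign (q.eval α₁) := by
  intro n
  induction n with
  | zero =>
    intro q hq α₁ α₂ _ _ x _
    obtain ⟨c, hc⟩ := Polynomial.natDegree_eq_zero.mp (Nat.le_zero.mp hq)
    simp [← hc]
  | succ n ih =>
    intro q hq α₁ α₂ hlt hsign x hx
    have hq' : (derivative q).natDegree ≤ n := by
      have := Polynomial.natDegree_derivative_le q
      omega
    have hsign' : ∀ k ≤ n, Real.sign ((Polynomial.derivative^[k] (derivative q)).eval α₁) =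
        Real.sign ((Polynomial.derivative^[k] (derivative q)).eval α₂) := by
      intro k hk
      have := hsign (k + 1) (by omega)
      simpa [Function.iterate_succ_apply] using this
    have hconst := ih (derivative q) hq' α₁ α₂ hlt hsign'
    -- hconst : ∀ x ∈ Icc, sign (q'.eval x) = sign (q'.eval α₁)
    have hcont : ContinuousOn (fun x => q.eval x) (Set.Icc α₁ α₂) :=
      (Polynomial.continuous q).continuousOn
    have hderiv : ∀ y : ℝ, deriv (fun x => q.eval x) y = (derivative q).eval y := by
      intro y; exact Polynomial.deriv q
    rcases lt_trichotomy ((derivative q).eval α₁) 0 with hd | hd | hd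
    · -- q' negative on Icc, q strictly anti
      have hneg : ∀ y ∈ Set.Icc α₁ α₂, (derivative q).eval y < 0 := by
        intro y hy
        have := hconst y hy
        rw [Real.sign_of_neg hd] at this
        rcases lt_trichotomy ((derivative q).eval y) 0 with h | h | h
        · exact h
        · rw [h, Real.sign_zero] at this; norm_num at this
        · rw [Real.sign_of_pos h] at this; norm_num at this
      have hanti : StrictAntiOn (fun x => q.eval x) (Set.Icc α₁ α₂) := by
        apply strictAntiOn_of_deriv_neg (convex_Icc _ _) hcont
        intro y hy
        rw [hderiv y]
        exact hneg y (interior_subset hy)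
      have hmem1 : α₁ ∈ Set.Icc α₁ α₂ := Set.left_mem_Icc.mpr hlt.le
      have hmem2 : α₂ ∈ Set.Icc α₁ α₂ := Set.right_mem_Icc.mpr hlt.le
      have h12 : q.eval α₂ < q.eval α₁ := hanti hmem1 hmem2 hlt
      have h0 := hsign 0 (by omega)
      simp only [Function.iterate_zero_apply] at h0
      rcases lt_trichotomy (q.eval α₁) 0 with h | h | h
      ·
        have : q.eval x ≤ q.eval α₁ := by
          rcases eq_or_lt_of_le hx.1 with he | he
          · rw [← he]
          · exact (hanti hmem1 hx he).le
        rw [Real.sign_of_neg h, Real.sign_of_neg (lt_of_le_of_lt this h)]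
      · -- eval α₁ = 0 and sign eval α₂ = 0 ⇒ eval α₂ = 0, but eval α₂ < eval α₁: contradiction
        rw [h, Real.sign_zero] at h0
        have := Real.sign_eq_zero_iff.mp h0.symm
        rw [h, this] at h12; exact absurd h12 (lt_irrefl 0)
      · -- eval α₁ > 0, sign α₂ = sign α₁ = 1 so eval α₂ > 0, x ≥ eval α₂ ... anti: eval x ≥ eval α₂ > 0
        have h2pos : 0 < q.eval α₂ := sign_eq_pos h0 h
        rw [Real.sign_of_pos h]
        have : q.eval α₂ ≤ q.eval x := by
          rcases eq_or_lt_of_le hx.2 with he | he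
          · rw [he]
          · exact (hanti hx hmem2 he).le
        rw [Real.sign_of_pos (lt_of_lt_of_le h2pos this)]
    · -- q' eval α₁ = 0 ⇒ q' zero on Icc ⇒ q' = 0 ⇒ q constant
      have hz : ∀ y ∈ Set.Icc α₁ α₂, (derivative q).eval y = 0 := by
        intro y hy
        have := hconst y hy
        rw [hd, Real.sign_zero] at this
        exact Real.sign_eq_zero_iff.mp this
      have : derivative q = 0 := by
        apply Polynomial.eq_zero_of_infinite_isRoot
        apply Set.Infinite.mono (s := Set.Icc α₁ α₂)
        · intro y hy; exact hz y hy
        · exact Set.Icc_infinite hlt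
      obtain ⟨c, hc⟩ := Polynomial.natDegree_eq_zero.mp
        (Polynomial.natDegree_eq_zero_of_derivative_eq_zero this)
      simp [← hc]
    · -- q' positive, q strictly mono
      have hpos : ∀ y ∈ Set.Icc α₁ α₂, 0 < (derivative q).eval y := by
        intro y hy
        have := hconst y hy
        rw [Real.sign_of_pos hd] at this
        rcases lt_trichotomy ((derivative q).eval y) 0 with h | h | h
        · rw [Real.sign_of_neg h] at this; norm_num at this
        · rw [h, Real.sign_zero] at this; norm_num at this
        · exact h
      have hmono : StrictMonoOn (fun x => q.eval x) (Set.Icc α₁ α₂) := by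
        apply strictMonoOn_of_deriv_pos (convex_Icc _ _) hcont
        intro y hy
        rw [hderiv y]
        exact hpos y (interior_subset hy)
      have hmem1 : α₁ ∈ Set.Icc α₁ α₂ := Set.left_mem_Icc.mpr hlt.le
      have hmem2 : α₂ ∈ Set.Icc α₁ α₂ := Set.right_mem_Icc.mpr hlt.le
      have h12 : q.eval α₁ < q.eval α₂ := hmono hmem1 hmem2 hlt
      have h0 := hsign 0 (by omega)
      simp only [Function.iterate_zero_apply] at h0
      rcases lt_trichotomy (q.eval α₁) 0 with h | h | h
      · have h2neg : q.eval α₂ < 0 := sign_eq_neg h0 h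
        rw [Real.sign_of_neg h]
        have : q.eval x ≤ q.eval α₂ := by
          rcases eq_or_lt_of_le hx.2 with he | he
          · rw [he]
          · exact (hmono hx hmem2 he).le
        rw [Real.sign_of_neg (lt_of_le_of_lt this h2neg)]
      · rw [h, Real.sign_zero] at h0
        have := Real.sign_eq_zero_iff.mp h0.symm
        rw [h, this] at h12; exact absurd h12 (lt_irrefl 0)
      · have : q.eval α₁ ≤ q.eval x := by
          rcases eq_or_lt_of_le hx.1 with he | he
          · rw [← he]
          · exact (hmono hmem1 hx he).le
        rw [Real.sign_of_pos h, Real.sign_of_pos (lt_of_lt_of_le h this)]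

theorem stmt_16 (p : Polynomial ℤ) (hp : p ≠ 0) (α₁ α₂ : ℝ)
    (h1 : Polynomial.aeval α₁ p = 0) (h2 : Polynomial.aeval α₂ p = 0) (hlt : α₁ < α₂) :
    ∃ k ∈ Finset.Icc 1 p.natDegree,
      Real.sign (Polynomial.aeval α₁ (Polynomial.derivative^[k] p)) ≠
        Real.sign (Polynomial.aeval α₂ (Polynomial.derivative^[k] p)) := by
  by_contra hcon
  push_neg at hcon
  set q : Polynomial ℝ := p.map (algebraMap ℤ ℝ) with hqdef
  have hinj : Function.Injective (algebraMap ℤ ℝ) := Int.cast_injective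
  have hq0 : q ≠ 0 := fun h => hp (Polynomial.map_injective _ hinj (by rw [Polynomial.map_zero]; exact h))
  have hdeg : q.natDegree = p.natDegree := Polynomial.natDegree_map_eq_of_injective hinj p
  have key : ∀ (k : ℕ) (α : ℝ),
      (Polynomial.derivative^[k] q).eval α = Polynomial.aeval α (Polynomial.derivative^[k] p) := by
    intro k α
    rw [hqdef, Polynomial.iterate_derivative_map, Polynomial.eval_map, Polynomial.aeval_def]
  have hsign : ∀ k ≤ p.natDegree, Real.sign ((Polynomial.derivative^[k] q).eval α₁) =
      Real.sign ((Polynomial.derivative^[k] q).eval α₂) := by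
    intro k hk
    rcases Nat.eq_zero_or_pos k with rfl | hk1
    · simp only [Function.iterate_zero_apply]
      have e1 : q.eval α₁ = 0 := by
        rw [hqdef, Polynomial.eval_map, ← Polynomial.aeval_def]; exact h1
      have e2 : q.eval α₂ = 0 := by
        rw [hqdef, Polynomial.eval_map, ← Polynomial.aeval_def]; exact h2
      rw [e1, e2]
    · rw [key, key]
      exact hcon k (Finset.mem_Icc.mpr ⟨hk1, hk⟩)
  have := thom_aux p.natDegree q (le_of_eq hdeg) α₁ α₂ hlt hsign
  have hz : ∀ x ∈ Set.Icc α₁ α₂, q.eval x = 0 := by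
    intro x hx
    have hs := this x hx
    have hα₁ : q.eval α₁ = 0 := by
      rw [hqdef, Polynomial.eval_map, ← Polynomial.aeval_def]; exact h1
    rw [hα₁, Real.sign_zero] at hs
    exact Real.sign_eq_zero_iff.mp hs
  apply hq0
  apply Polynomial.eq_zero_of_infinite_isRoot
  apply Set.Infinite.mono (s := Set.Icc α₁ α₂)
  · intro y hy; exact hz y hy
  · exact Set.Icc_infinite hlt
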